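/- arXiv:1401.3456 — 3 statements merged into one kernel-verified Lean document; each statement's English description precedes it below -/
import Mathlib

section
/- Let σ > 0 and V ∈ ℝ. Then ∫_0^∞ ∫_{−∞}^{V − x/Δt} (v − V)·exp(−v²/(2σ²)) dv dx, divided by Δt·σ·√(2π), equals −(1/2)·[(σ² + V²)·erfc(−V/(σ√2)) + V·σ·√(2/π)·exp(−V²/(2σ²))]. -/
open MeasureTheory Real

section AuxLemmas
open Set Filter Topology

lemma aux_i1 {b : ℝ} (hb : 0 < b) : Integrable fun x : ℝ => x * Real.exp (-b * x ^ 2) :=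
  integrable_mul_exp_neg_mul_sq hb

lemma aux_i2 {b : ℝ} (hb : 0 < b) : Integrable fun x : ℝ => x ^ 2 * Real.exp (-b * x ^ 2) := by
  have := integrable_rpow_mul_exp_neg_mul_sq hb (s := 2) (by norm_num)
  simpa [Real.rpow_two] using this

lemma aux_isq {b : ℝ} (V : ℝ) (hb : 0 < b) :
    Integrable fun v : ℝ => (v - V) ^ 2 * Real.exp (-b * v ^ 2) := by
  have h : (fun v : ℝ => (v - V) ^ 2 * Real.exp (-b * v ^ 2)) =
      fun v => v ^ 2 * Real.exp (-b * v ^ 2) +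
        (-(2 * V)) * (v * Real.exp (-b * v ^ 2)) + V ^ 2 * Real.exp (-b * v ^ 2) := by
    funext v; ring
  rw [h]
  exact ((aux_i2 hb).add ((aux_i1 hb).const_mul _)).add ((integrable_exp_neg_mul_sq hb).const_mul _)

lemma aux_tendsto_sq {b : ℝ} (hb : 0 < b) :
    Tendsto (fun v : ℝ => -b * v ^ 2) atBot atBot := by
  have h1 : Tendsto (fun v : ℝ => v ^ 2) atBot atTop := by
    have := (tendsto_pow_atTop (two_ne_zero)).comp (tendsto_neg_atBot_atTop : Tendsto (fun x:ℝ => -x) atBot atTop)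
    simpa [Function.comp_def, neg_pow] using this
  exact h1.const_mul_atTop_of_neg (neg_lt_zero.2 hb)

lemma aux_tendsto_exp {b : ℝ} (hb : 0 < b) :
    Tendsto (fun v : ℝ => Real.exp (-b * v ^ 2)) atBot (𝓝 0) :=
  Real.tendsto_exp_atBot.comp (aux_tendsto_sq hb)

lemma aux_tendsto_xexp {b : ℝ} (hb : 0 < b) :
    Tendsto (fun v : ℝ => v * Real.exp (-b * v ^ 2)) atBot (𝓝 0) := by
  have htop : Tendsto (fun x : ℝ => x * Real.exp (-b * x ^ 2)) atTop (𝓝 0) := by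
    have := (rpow_mul_exp_neg_mul_sq_isLittleO_exp_neg hb 1).tendsto_zero_of_tendsto
      (tendsto_exp_atBot.comp <| tendsto_id.const_mul_atTop_of_neg
        (neg_lt_zero.mpr one_half_pos))
    simpa [Real.rpow_one] using this
  have := (htop.comp (tendsto_neg_atBot_atTop : Tendsto (fun x:ℝ => -x) atBot atTop)).neg
  simpa [Function.comp_def, neg_sq, neg_mul, neg_neg] using this

lemma aux_J1 {b : ℝ} (hb : 0 < b) (V : ℝ) :
    ∫ v in Iic V, v * Real.exp (-b * v ^ 2) = -(2 * b)⁻¹ * Real.exp (-b * V ^ 2) := by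
  have hb' : (2 * b) ≠ 0 := by positivity
  have A : ∀ x : ℝ, HasDerivAt (fun v : ℝ => -(2 * b)⁻¹ * Real.exp (-b * v ^ 2))
      (x * Real.exp (-b * x ^ 2)) x := by
    intro x
    refine (((hasDerivAt_pow 2 x).const_mul (-b)).exp.const_mul (-(2 * b)⁻¹)).congr_deriv ?_
    field_simp
    ring
  have B : Tendsto (fun v : ℝ => -(2 * b)⁻¹ * Real.exp (-b * v ^ 2)) atBot (𝓝 0) := by
    have := (aux_tendsto_exp hb).const_mul (-(2 * b)⁻¹)
    simpa using this
  have := integral_Iic_of_hasDerivAt_of_tendsto' (a := V) (m := 0)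
    (fun x _ => A x) (aux_i1 hb).integrableOn B
  rw [this]; ring

lemma aux_J2 {b : ℝ} (hb : 0 < b) (V : ℝ) :
    ∫ v in Iic V, v ^ 2 * Real.exp (-b * v ^ 2) =
      -(2 * b)⁻¹ * V * Real.exp (-b * V ^ 2) +
        (2 * b)⁻¹ * ∫ v in Iic V, Real.exp (-b * v ^ 2) := by
  have hb' : (2 * b) ≠ 0 := by positivity
  have A : ∀ x : ℝ, HasDerivAt (fun v : ℝ => -(2 * b)⁻¹ * (v * Real.exp (-b * v ^ 2)))
      (x ^ 2 * Real.exp (-b * x ^ 2) - (2 * b)⁻¹ * Real.exp (-b * x ^ 2)) x := by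
    intro x
    have h1 : HasDerivAt (fun v : ℝ => v * Real.exp (-b * v ^ 2))
        (1 * Real.exp (-b * x ^ 2) + x * (Real.exp (-b * x ^ 2) * (-b * (2 * x ^ 1)))) x :=
      (hasDerivAt_id x).mul (((hasDerivAt_pow 2 x).const_mul (-b)).exp)
    refine (h1.const_mul (-(2 * b)⁻¹)).congr_deriv ?_
    field_simp
    ring
  have B : Tendsto (fun v : ℝ => -(2 * b)⁻¹ * (v * Real.exp (-b * v ^ 2))) atBot (𝓝 0) := by
    have := (aux_tendsto_xexp hb).const_mul (-(2 * b)⁻¹)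
    simpa using this
  have hint : IntegrableOn
      (fun x : ℝ => x ^ 2 * Real.exp (-b * x ^ 2) - (2 * b)⁻¹ * Real.exp (-b * x ^ 2))
      (Iic V) := ((aux_i2 hb).sub ((integrable_exp_neg_mul_sq hb).const_mul _)).integrableOn
  have key := integral_Iic_of_hasDerivAt_of_tendsto' (a := V) (m := 0)
    (fun x _ => A x) hint B
  rw [integral_sub (aux_i2 hb).integrableOn
      ((integrable_exp_neg_mul_sq hb).const_mul _).integrableOn] at key
  have h2 : ∫ v in Iic V, (2 * b)⁻¹ * Real.exp (-b * v ^ 2) =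
      (2 * b)⁻¹ * ∫ v in Iic V, Real.exp (-b * v ^ 2) := integral_const_mul _ _
  rw [h2] at key
  linarith [key]

lemma aux_J0 {σ : ℝ} (hσ : 0 < σ) (V : ℝ) :
    ∫ v in Iic V, Real.exp (-(2 * σ ^ 2)⁻¹ * v ^ 2) =
      (σ * Real.sqrt 2) * ∫ s in Ioi (-V / (σ * Real.sqrt 2)), Real.exp (-s ^ 2) := by
  set k : ℝ := σ * Real.sqrt 2 with hk
  have hk0 : 0 < k := by positivity
  have hk2 : k ^ 2 = 2 * σ ^ 2 := by
    rw [hk, mul_pow, Real.sq_sqrt (by norm_num : (2:ℝ) ≥ 0)]; ring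
  have h1 : ∫ v in Iic V, Real.exp (-(2 * σ ^ 2)⁻¹ * v ^ 2) =
      ∫ x in Ioi (-V), Real.exp (-(2 * σ ^ 2)⁻¹ * x ^ 2) := by
    rw [← neg_neg V, ← integral_comp_neg_Ioi]
    simp
  have h2 := integral_comp_mul_left_Ioi
    (fun s => Real.exp (-(2 * σ ^ 2)⁻¹ * s ^ 2)) (-V / k) hk0
  have h3 : ∀ x : ℝ, Real.exp (-(2 * σ ^ 2)⁻¹ * (k * x) ^ 2) = Real.exp (-x ^ 2) := by
    intro x
    congr 1
    have : (k * x) ^ 2 = (2 * σ ^ 2) * x ^ 2 := by rw [mul_pow, hk2]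
    rw [this]
    field_simp
  have h4 : k * (-V / k) = -V := by field_simp
  rw [h4] at h2
  simp only [h3] at h2
  rw [h1, h2, smul_eq_mul, ← mul_assoc, mul_inv_cancel₀ (ne_of_gt hk0), one_mul]

lemma aux_fubini {σ Δt : ℝ} (V : ℝ) (hσ : 0 < σ) (hΔt : 0 < Δt) :
    (∫ x in Ioi (0 : ℝ), ∫ v in Iio (V - x / Δt),
        (v - V) * Real.exp (-v ^ 2 / (2 * σ ^ 2))) =
      -Δt * ∫ v in Iic V, (v - V) ^ 2 * Real.exp (-v ^ 2 / (2 * σ ^ 2)) := by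
  set b : ℝ := (2 * σ ^ 2)⁻¹ with hbdef
  have hb : 0 < b := by positivity
  have hconv : ∀ v : ℝ, -v ^ 2 / (2 * σ ^ 2) = -b * v ^ 2 := by
    intro v; rw [hbdef, div_eq_mul_inv]; ring
  simp only [hconv]
  set f : ℝ → ℝ := fun v => (v - V) * Real.exp (-b * v ^ 2) with hf
  have hfc : Continuous f := by
    apply Continuous.mul (by continuity)
    exact Real.continuous_exp.comp (by continuity)
  set F : ℝ → ℝ → ℝ := fun x v => Set.indicator (Iio (Δt * (V - v))) (fun _ => f v) x with hF
  -- slice in v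
  have hslice : ∀ x : ℝ, (fun v => F x v) = Set.indicator (Iio (V - x / Δt)) f := by
    intro x
    funext v
    have hiff : x < Δt * (V - v) ↔ v < V - x / Δt := by
      rw [lt_sub_comm, ← div_lt_iff₀' hΔt]
    simp only [hF, Set.indicator, mem_Iio]
    by_cases h : v < V - x / Δt
    · rw [if_pos (hiff.2 h), if_pos h]
    · rw [if_neg (fun hh => h (hiff.1 hh)), if_neg h]
  -- measurability on the product
  have hS : MeasurableSet {p : ℝ × ℝ | p.1 < Δt * (V - p.2)} :=
    measurableSet_lt measurable_fst (by fun_prop)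
  have hFeq : (Function.uncurry F) =
      Set.indicator {p : ℝ × ℝ | p.1 < Δt * (V - p.2)} (fun p => f p.2) := by
    funext p
    simp only [Function.uncurry, hF, Set.indicator, mem_Iio, Set.mem_setOf_eq]
  have hmeas : AEStronglyMeasurable (Function.uncurry F)
      ((volume.restrict (Ioi (0:ℝ))).prod volume) := by
    rw [hFeq]
    exact ((hfc.comp continuous_snd).aestronglyMeasurable).indicator hS
  -- the x-integral of each v-slice
  have hxint : ∀ v : ℝ, ∫ x in Ioi (0:ℝ), ‖F x v‖ = max (Δt * (V - v)) 0 * ‖f v‖ := by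
    intro v
    have : (fun x => ‖F x v‖) = Set.indicator (Iio (Δt * (V - v))) (fun _ => ‖f v‖) := by
      funext x
      rw [hF]
      exact norm_indicator_eq_indicator_norm _ _
    rw [this, integral_indicator measurableSet_Iio,
      Measure.restrict_restrict measurableSet_Iio, setIntegral_const, Iio_inter_Ioi,
      Real.volume_real_Ioo, smul_eq_mul]
    rw [sub_zero]
  have hxint' : ∀ v : ℝ, ∫ x in Ioi (0:ℝ), F x v = max (Δt * (V - v)) 0 * f v := by
    intro v
    rw [hF]
    rw [integral_indicator measurableSet_Iio,
      Measure.restrict_restrict measurableSet_Iio, setIntegral_const, Iio_inter_Ioi,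
      Real.volume_real_Ioo, smul_eq_mul, sub_zero]
  -- integrability on the product
  have hxslice : ∀ v : ℝ, Integrable (fun x => F x v) (volume.restrict (Ioi (0:ℝ))) := by
    intro v
    rw [hF]
    rw [integrable_indicator_iff measurableSet_Iio]
    refine integrableOn_const (ne_of_lt ?_)
    rw [Measure.restrict_apply measurableSet_Iio, Iio_inter_Ioi, Real.volume_Ioo]
    exact ENNReal.ofReal_lt_top
  have hbound : Integrable (fun v : ℝ => Δt * ((v - V) ^ 2 * Real.exp (-b * v ^ 2))) :=
    (aux_isq V hb).const_mul Δt
  have hnormint : Integrable (fun v : ℝ => ∫ x in Ioi (0:ℝ), ‖F x v‖) := by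
    simp only [hxint]
    apply hbound.mono'
    · have hc : Continuous fun v : ℝ => max (Δt * (V - v)) 0 * ‖f v‖ :=
        ((continuous_const.mul (continuous_const.sub continuous_id)).max continuous_const).mul hfc.norm
      exact hc.aestronglyMeasurable
    · filter_upwards with v
      rw [Real.norm_eq_abs, abs_of_nonneg (mul_nonneg (le_max_right _ _) (norm_nonneg _))]
      have h1 : max (Δt * (V - v)) 0 ≤ Δt * |V - v| := by
        apply max_le
        · exact mul_le_mul_of_nonneg_left (le_abs_self _) hΔt.le
        · positivity
      have h2 : ‖f v‖ = |v - V| * Real.exp (-b * v ^ 2) := by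
        rw [hf, Real.norm_eq_abs, abs_mul, abs_of_pos (Real.exp_pos _)]
      calc max (Δt * (V - v)) 0 * ‖f v‖ ≤ (Δt * |V - v|) * ‖f v‖ :=
            mul_le_mul_of_nonneg_right h1 (norm_nonneg _)
        _ = Δt * ((v - V) ^ 2 * Real.exp (-b * v ^ 2)) := by
            rw [h2, abs_sub_comm V v]
            rw [show (v - V) ^ 2 = |v - V| ^ 2 from (sq_abs _).symm]
            ring
  have hInt : Integrable (Function.uncurry F)
      ((volume.restrict (Ioi (0:ℝ))).prod volume) := by
    rw [integrable_prod_iff' hmeas]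
    exact ⟨Filter.Eventually.of_forall hxslice, hnormint⟩
  -- apply Fubini
  have hswap := integral_integral_swap (f := F) hInt
  have hlhs : (∫ x in Ioi (0 : ℝ), ∫ v in Iio (V - x / Δt), f v) =
      ∫ x in Ioi (0:ℝ), ∫ v, F x v := by
    apply integral_congr_ae
    filter_upwards with x
    rw [hslice x, integral_indicator measurableSet_Iio]
  rw [hlhs, hswap]
  simp only [hxint']
  -- now reduce to an integral over Iio V
  have hind : (fun v : ℝ => max (Δt * (V - v)) 0 * f v) =
      Set.indicator (Iio V) (fun v => -Δt * ((v - V) ^ 2 * Real.exp (-b * v ^ 2))) := by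
    funext v
    by_cases h : v < V
    · rw [Set.indicator_of_mem (mem_Iio.2 h)]
      rw [max_eq_left (by nlinarith : (0:ℝ) ≤ Δt * (V - v))]
      rw [hf]; ring
    · rw [Set.indicator_of_notMem (fun hh => h (mem_Iio.1 hh))]
      rw [max_eq_right (by nlinarith [le_of_not_gt h] : Δt * (V - v) ≤ 0)]
      ring
  rw [hind, integral_indicator measurableSet_Iio, ← integral_Iic_eq_integral_Iio,
    ← integral_const_mul]

end AuxLemmas

/-- The complementary error function `erfc(z) = (2/√π) ∫_z^∞ exp(-s²) ds`. -/
noncomputable def erfc (z : ℝ) : ℝ :=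
  (2 / Real.sqrt Real.pi) * ∫ s in Set.Ioi z, Real.exp (-s ^ 2)

open Set Filter Topology in
theorem stmt_7 (σ V Δt : ℝ) (hσ : 0 < σ) (hΔt : 0 < Δt) :
    (∫ x in Set.Ioi (0 : ℝ), ∫ v in Set.Iio (V - x / Δt),
        (v - V) * Real.exp (-v ^ 2 / (2 * σ ^ 2))) / (Δt * σ * Real.sqrt (2 * Real.pi)) =
      -(1 / 2) * ((σ ^ 2 + V ^ 2) * erfc (-V / (σ * Real.sqrt 2)) +
        V * σ * Real.sqrt (2 / Real.pi) * Real.exp (-V ^ 2 / (2 * σ ^ 2))) := by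
  have hb : (0:ℝ) < (2 * σ ^ 2)⁻¹ := by positivity
  have hconv : ∀ v : ℝ, -v ^ 2 / (2 * σ ^ 2) = -(2 * σ ^ 2)⁻¹ * v ^ 2 := by
    intro v; rw [div_eq_mul_inv]; ring
  rw [aux_fubini V hσ hΔt]
  simp only [hconv]
  have hJ : ∫ v in Iic V, (v - V) ^ 2 * Real.exp (-(2 * σ ^ 2)⁻¹ * v ^ 2) =
      ((∫ v in Iic V, v ^ 2 * Real.exp (-(2 * σ ^ 2)⁻¹ * v ^ 2)) +
        (-(2 * V)) * ∫ v in Iic V, v * Real.exp (-(2 * σ ^ 2)⁻¹ * v ^ 2)) +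
        V ^ 2 * ∫ v in Iic V, Real.exp (-(2 * σ ^ 2)⁻¹ * v ^ 2) := by
    rw [show (fun v : ℝ => (v - V) ^ 2 * Real.exp (-(2 * σ ^ 2)⁻¹ * v ^ 2)) =
        (fun v : ℝ => (v ^ 2 * Real.exp (-(2 * σ ^ 2)⁻¹ * v ^ 2) +
          (-(2 * V)) * (v * Real.exp (-(2 * σ ^ 2)⁻¹ * v ^ 2))) +
          V ^ 2 * Real.exp (-(2 * σ ^ 2)⁻¹ * v ^ 2)) from funext fun v => by ring]
    have i1 : IntegrableOn (fun v : ℝ => v ^ 2 * Real.exp (-(2 * σ ^ 2)⁻¹ * v ^ 2) +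
        (-(2 * V)) * (v * Real.exp (-(2 * σ ^ 2)⁻¹ * v ^ 2))) (Iic V) volume :=
      ((aux_i2 hb).add ((aux_i1 hb).const_mul _)).integrableOn
    have i2 : IntegrableOn (fun v : ℝ => V ^ 2 * Real.exp (-(2 * σ ^ 2)⁻¹ * v ^ 2))
        (Iic V) volume := ((integrable_exp_neg_mul_sq hb).const_mul _).integrableOn
    have i3 : IntegrableOn (fun v : ℝ => (-(2 * V)) * (v * Real.exp (-(2 * σ ^ 2)⁻¹ * v ^ 2)))
        (Iic V) volume := ((aux_i1 hb).const_mul _).integrableOn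
    rw [integral_add i1 i2, integral_add ((aux_i2 hb).integrableOn) i3,
      integral_const_mul, integral_const_mul]
  rw [hJ, aux_J1 hb V, aux_J2 hb V, aux_J0 hσ V]
  unfold erfc
  have h2π : Real.sqrt (2 * π) = Real.sqrt 2 * Real.sqrt π := Real.sqrt_mul (by norm_num) _
  have h2dπ : Real.sqrt (2 / π) = Real.sqrt 2 / Real.sqrt π := Real.sqrt_div (by norm_num) _
  have hs2 : Real.sqrt 2 * Real.sqrt 2 = 2 := Real.mul_self_sqrt (by norm_num)
  have hπ : (0:ℝ) < Real.sqrt π := Real.sqrt_pos.2 Real.pi_pos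
  have hc2 : (0:ℝ) < Real.sqrt 2 := by positivity
  set I : ℝ := ∫ s in Ioi (-V / (σ * Real.sqrt 2)), Real.exp (-s ^ 2)
  set E : ℝ := Real.exp (-(2 * σ ^ 2)⁻¹ * V ^ 2)
  rw [h2π, h2dπ]
  field_simp
  linear_combination (σ * V * E) * hs2
end

section
/- Let σ > 0 and V ∈ ℝ. Then ∫_0^∞ ∫_{−∞}^{V − x/Δt} (v − V)²·exp(−v²/(2σ²)) dv dx, divided by Δt·σ·√(2π), equals (1/2)·[V·(3σ² + V²)·erfc(−V/(σ√2)) + (2σ² + V²)·σ·√(2/π)·exp(−V²/(2σ²))]. -/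
open MeasureTheory Real Set Filter Nat Topology

lemma gauss_bound {b : ℝ} (hb : 0 < b) (n : ℕ) (v : ℝ) :
    |v| ^ n * Real.exp (-b * v ^ 2) ≤
      (1 + (n ! : ℝ) / (b / 2) ^ n) * Real.exp (-(b / 2) * v ^ 2) := by
  have hc : (0:ℝ) < b / 2 := by linarith
  have hx : (0:ℝ) ≤ b / 2 * v ^ 2 := by positivity
  have h1 := Real.pow_div_factorial_le_exp (x := b / 2 * v ^ 2) hx n
  have hfac : (0:ℝ) < (n ! : ℝ) := by positivity
  have h1' : (b / 2 * v ^ 2) ^ n ≤ (n ! : ℝ) * Real.exp (b / 2 * v ^ 2) := by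
    rw [div_le_iff₀ hfac] at h1; linarith [h1]
  have hE : Real.exp (-(b / 2) * v ^ 2) * Real.exp (b / 2 * v ^ 2) = 1 := by
    rw [← Real.exp_add]; ring_nf; exact Real.exp_zero
  have he_pos := Real.exp_pos (-(b / 2) * v ^ 2)
  have h3 : (b / 2 * v ^ 2) ^ n * Real.exp (-(b / 2) * v ^ 2) ≤ (n ! : ℝ) := by
    calc (b / 2 * v ^ 2) ^ n * Real.exp (-(b / 2) * v ^ 2)
        ≤ ((n ! : ℝ) * Real.exp (b / 2 * v ^ 2)) * Real.exp (-(b / 2) * v ^ 2) :=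
          mul_le_mul_of_nonneg_right h1' he_pos.le
      _ = (n ! : ℝ) := by rw [mul_assoc, mul_comm (Real.exp _), hE, mul_one]
  have h2 : (v ^ 2) ^ n * Real.exp (-(b / 2) * v ^ 2) ≤ (n ! : ℝ) / (b / 2) ^ n := by
    rw [le_div_iff₀ (pow_pos hc n)]
    calc (v ^ 2) ^ n * Real.exp (-(b / 2) * v ^ 2) * (b / 2) ^ n
        = (b / 2 * v ^ 2) ^ n * Real.exp (-(b / 2) * v ^ 2) := by rw [mul_pow]; ring
      _ ≤ (n ! : ℝ) := h3
  have habs : |v| ^ n ≤ 1 + (v ^ 2) ^ n := by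
    have h2n : (v ^ 2) ^ n = |v| ^ (2 * n) := by
      rw [← sq_abs, ← pow_mul]
    rcases le_total (|v|) 1 with h | h
    · have h4 : |v| ^ n ≤ 1 := pow_le_one₀ (abs_nonneg v) h
      have : (0:ℝ) ≤ (v ^ 2) ^ n := by positivity
      linarith
    · have h4 : |v| ^ n ≤ |v| ^ (2 * n) := pow_le_pow_right₀ h (by omega)
      rw [h2n]; linarith
  have hsplit : Real.exp (-b * v ^ 2) =
      Real.exp (-(b / 2) * v ^ 2) * Real.exp (-(b / 2) * v ^ 2) := by
    rw [← Real.exp_add]; congr 1; ring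
  have hle1 : Real.exp (-(b / 2) * v ^ 2) ≤ 1 := Real.exp_le_one_iff.2 (by nlinarith)
  have key : |v| ^ n * Real.exp (-(b / 2) * v ^ 2) ≤ 1 + (n ! : ℝ) / (b / 2) ^ n := by
    calc |v| ^ n * Real.exp (-(b / 2) * v ^ 2)
        ≤ (1 + (v ^ 2) ^ n) * Real.exp (-(b / 2) * v ^ 2) :=
          mul_le_mul_of_nonneg_right habs he_pos.le
      _ = Real.exp (-(b / 2) * v ^ 2) + (v ^ 2) ^ n * Real.exp (-(b / 2) * v ^ 2) := by ring
      _ ≤ 1 + (n ! : ℝ) / (b / 2) ^ n := add_le_add hle1 h2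
  calc |v| ^ n * Real.exp (-b * v ^ 2)
      = |v| ^ n * Real.exp (-(b / 2) * v ^ 2) * Real.exp (-(b / 2) * v ^ 2) := by
        rw [hsplit]; ring
    _ ≤ (1 + (n ! : ℝ) / (b / 2) ^ n) * Real.exp (-(b / 2) * v ^ 2) :=
        mul_le_mul_of_nonneg_right key he_pos.le


lemma integrable_abs_pow_gauss {b : ℝ} (hb : 0 < b) (n : ℕ) :
    Integrable fun v : ℝ => |v| ^ n * Real.exp (-b * v ^ 2) := by
  have hc : (0:ℝ) < b / 2 := by linarith
  refine Integrable.mono' ((integrable_exp_neg_mul_sq hc).const_mul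
      (1 + (n ! : ℝ) / (b / 2) ^ n)) ?_ ?_
  · exact ((continuous_abs.pow n).mul (by fun_prop)).aestronglyMeasurable
  · filter_upwards with v
    have h := gauss_bound hb n v
    have : ‖|v| ^ n * Real.exp (-b * v ^ 2)‖ = |v| ^ n * Real.exp (-b * v ^ 2) := by
      rw [Real.norm_eq_abs, abs_of_nonneg (by positivity)]
    rw [this]
    exact h

lemma integrable_pow_gauss {b : ℝ} (hb : 0 < b) (n : ℕ) :
    Integrable fun v : ℝ => v ^ n * Real.exp (-b * v ^ 2) := by
  refine (integrable_abs_pow_gauss hb n).mono' ?_ ?_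
  · exact ((continuous_pow n).mul (by fun_prop)).aestronglyMeasurable
  · filter_upwards with v
    rw [Real.norm_eq_abs, abs_mul, abs_pow, abs_of_pos (Real.exp_pos _)]

lemma tendsto_pow_gauss_atBot {b : ℝ} (hb : 0 < b) (n : ℕ) :
    Tendsto (fun v : ℝ => v ^ n * Real.exp (-b * v ^ 2)) atBot (𝓝 0) := by
  have hc : (0:ℝ) < b / 2 := by linarith
  apply squeeze_zero_norm (a := fun v : ℝ =>
      (1 + (n ! : ℝ) / (b / 2) ^ n) * Real.exp (-(b / 2) * v ^ 2))
  · intro v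
    rw [Real.norm_eq_abs, abs_mul, abs_pow, abs_of_pos (Real.exp_pos _)]
    exact gauss_bound hb n v
  · have h1 : Tendsto (fun v : ℝ => -(b / 2) * v ^ 2) atBot atBot := by
      have h2 : Tendsto (fun v : ℝ => v ^ 2) atBot atTop := by
        have habs : Tendsto (fun v : ℝ => |v| * |v|) atBot atTop :=
          tendsto_abs_atBot_atTop.atTop_mul_atTop₀ tendsto_abs_atBot_atTop
        exact habs.congr fun v => by rw [← abs_mul, abs_mul_self, sq]
      exact (tendsto_const_mul_atBot_of_neg (by linarith : -(b/2) < (0:ℝ))).2 h2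
    have := (Real.tendsto_exp_atBot.comp h1).const_mul (1 + (n ! : ℝ) / (b / 2) ^ n)
    simpa using this

lemma gauss_cube_integral {σ : ℝ} (hσ : 0 < σ) (V : ℝ) :
    ∫ v in Iio V, (V - v) ^ 3 * Real.exp (-(2 * σ ^ 2)⁻¹ * v ^ 2) =
      (V ^ 3 + 3 * V * σ ^ 2) * (∫ t in Iic V, Real.exp (-(2 * σ ^ 2)⁻¹ * t ^ 2)) +
      (σ ^ 2 * V ^ 2 + 2 * σ ^ 4) * Real.exp (-(2 * σ ^ 2)⁻¹ * V ^ 2) := by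
  set b : ℝ := (2 * σ ^ 2)⁻¹ with hb_def
  have hb : 0 < b := by rw [hb_def]; positivity
  set E : ℝ → ℝ := fun t => Real.exp (-b * t ^ 2) with hE_def
  have hEcont : Continuous E := by rw [hE_def]; fun_prop
  set Q : ℝ → ℝ := fun v => 3 * V ^ 2 * σ ^ 2 - 3 * V * σ ^ 2 * v + σ ^ 2 * v ^ 2 + 2 * σ ^ 4
    with hQ_def
  set Φ : ℝ → ℝ := fun v => (V ^ 3 + 3 * V * σ ^ 2) * (∫ t in (0:ℝ)..v, E t) + Q v * E v
    with hΦ_def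
  have hderiv : ∀ v : ℝ, HasDerivAt Φ ((V - v) ^ 3 * E v) v := by
    intro v
    have hint : HasDerivAt (fun u => ∫ t in (0:ℝ)..u, E t) (E v) v := by
      refine intervalIntegral.integral_hasDerivAt_right
        (hEcont.intervalIntegrable _ _) ?_ hEcont.continuousAt
      exact hEcont.stronglyMeasurable.stronglyMeasurableAtFilter
    have hexp' : HasDerivAt E (E v * (-b * (2 * v))) v := by
      have h1 : HasDerivAt (fun u : ℝ => -b * u ^ 2) (-b * (2 * v)) v := by
        simpa using (hasDerivAt_pow 2 v).const_mul (-b)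
      exact h1.exp
    have hQ' : HasDerivAt Q (-(3 * V * σ ^ 2) + σ ^ 2 * (2 * v)) v := by
      have a2 : HasDerivAt (fun u : ℝ => 3 * V * σ ^ 2 * u) (3 * V * σ ^ 2) v := by
        simpa using (hasDerivAt_id v).const_mul (3 * V * σ ^ 2)
      have a3 : HasDerivAt (fun u : ℝ => σ ^ 2 * u ^ 2) (σ ^ 2 * (2 * v)) v := by
        simpa using (hasDerivAt_pow 2 v).const_mul (σ ^ 2)
      have := (((hasDerivAt_const v (3 * V ^ 2 * σ ^ 2)).sub a2).add a3).add
        (hasDerivAt_const v (2 * σ ^ 4))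
      rw [show -(3 * V * σ ^ 2) + σ ^ 2 * (2 * v) = 0 - 3 * V * σ ^ 2 + σ ^ 2 * (2 * v) + 0 by ring]
      exact this
    have htot := (hint.const_mul (V ^ 3 + 3 * V * σ ^ 2)).add (hQ'.mul hexp')
    refine htot.congr_deriv ?_
    simp only [hQ_def, hb_def]
    field_simp
    ring
  have hiOn : ∀ a : ℝ, IntegrableOn E (Iic a) := fun a =>
    ((integrable_exp_neg_mul_sq hb).integrableOn)
  have hlim : Tendsto Φ atBot (𝓝 ((V ^ 3 + 3 * V * σ ^ 2) * (-(∫ t in Iic (0:ℝ), E t)))) := by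
    have h1 : Tendsto (fun v => ∫ t in (0:ℝ)..v, E t) atBot (𝓝 (-(∫ t in Iic (0:ℝ), E t))) := by
      have h0 := (intervalIntegral_tendsto_integral_Iic (0:ℝ) (hiOn 0) tendsto_id).neg
      refine h0.congr fun v => ?_
      rw [← intervalIntegral.integral_symm]
      simp
    have h2 : Tendsto (fun v => Q v * E v) atBot (𝓝 0) := by
      have t0 := tendsto_pow_gauss_atBot hb 0
      have t1 := tendsto_pow_gauss_atBot hb 1
      have t2 := tendsto_pow_gauss_atBot hb 2
      have hc := (((t0.const_mul (3 * V ^ 2 * σ ^ 2)).sub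
        (t1.const_mul (3 * V * σ ^ 2))).add (t2.const_mul (σ ^ 2))).add
        (t0.const_mul (2 * σ ^ 4))
      have hc' : Tendsto (fun v : ℝ => 3 * V ^ 2 * σ ^ 2 * (v ^ 0 * Real.exp (-b * v ^ 2)) -
          3 * V * σ ^ 2 * (v ^ 1 * Real.exp (-b * v ^ 2)) +
          σ ^ 2 * (v ^ 2 * Real.exp (-b * v ^ 2)) +
          2 * σ ^ 4 * (v ^ 0 * Real.exp (-b * v ^ 2))) atBot (𝓝 0) := by
        simpa using hc
      refine hc'.congr fun v => ?_
      simp only [hQ_def, hE_def]; ring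
    have := (h1.const_mul (V ^ 3 + 3 * V * σ ^ 2)).add h2
    simpa using this
  have hint3 : IntegrableOn (fun v => (V - v) ^ 3 * E v) (Iic V) := by
    refine Integrable.integrableOn ?_
    have i0 := (integrable_pow_gauss hb 0).const_mul (V ^ 3)
    have i1 := (integrable_pow_gauss hb 1).const_mul (3 * V ^ 2)
    have i2 := (integrable_pow_gauss hb 2).const_mul (3 * V)
    have i3 := integrable_pow_gauss hb 3
    have h := ((i0.sub i1).add i2).sub i3
    refine h.congr (Eventually.of_forall fun v => ?_)
    simp only [hE_def, Pi.add_apply, Pi.sub_apply]; ring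
  have hFTC := integral_Iic_of_hasDerivAt_of_tendsto
    (hderiv V).continuousAt.continuousWithinAt (fun x _ => hderiv x) hint3 hlim
  have hsub := intervalIntegral.integral_Iic_sub_Iic (hiOn 0) (hiOn V)
  have hgoal : (∫ v in Iio V, (V - v) ^ 3 * Real.exp (-b * v ^ 2)) =
      ∫ v in Iic V, (V - v) ^ 3 * E v := by
    rw [← integral_Iic_eq_integral_Iio]
  rw [hgoal, hFTC]
  simp only [hΦ_def, hQ_def, hE_def]
  linear_combination (-(V ^ 3 + 3 * V * σ ^ 2)) * hsub

lemma iic_gauss {σ : ℝ} (hσ : 0 < σ) (V : ℝ) :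
    ∫ t in Iic V, Real.exp (-(2 * σ ^ 2)⁻¹ * t ^ 2)
      = σ * Real.sqrt 2 * ((Real.sqrt π / 2) * erfc (-V / (σ * Real.sqrt 2))) := by
  have hk : (0:ℝ) < σ * Real.sqrt 2 := by positivity
  set k := σ * Real.sqrt 2 with hk_def
  have hk2 : k ^ 2 = 2 * σ ^ 2 := by
    rw [hk_def, mul_pow, Real.sq_sqrt (by norm_num : (0:ℝ) ≤ 2)]; ring
  have h1 : ∫ t in Iic V, Real.exp (-(2 * σ ^ 2)⁻¹ * t ^ 2)
      = ∫ x in Ioi (-V), Real.exp (-(2 * σ ^ 2)⁻¹ * x ^ 2) := by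
    have h := integral_comp_neg_Ioi (-V) (fun x => Real.exp (-(2 * σ ^ 2)⁻¹ * x ^ 2))
    rw [neg_neg] at h
    rw [← h]
    refine setIntegral_congr_fun measurableSet_Ioi fun x _ => ?_
    congr 1; ring
  have h2 := integral_comp_mul_left_Ioi (fun x => Real.exp (-(2 * σ ^ 2)⁻¹ * x ^ 2))
    (-V / k) hk
  have hkV : k * (-V / k) = -V := by field_simp
  rw [hkV] at h2
  have h3 : ∀ s : ℝ, Real.exp (-(2 * σ ^ 2)⁻¹ * (k * s) ^ 2) = Real.exp (-s ^ 2) := by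
    intro s; congr 1
    rw [mul_pow, hk2]
    field_simp
  simp only [h3] at h2
  have h4 : ∫ x in Ioi (-V), Real.exp (-(2 * σ ^ 2)⁻¹ * x ^ 2)
      = k * ∫ s in Ioi (-V / k), Real.exp (-s ^ 2) := by
    rw [h2, smul_eq_mul, ← mul_assoc, mul_inv_cancel₀ hk.ne', one_mul]
  rw [h1, h4]
  simp only [erfc]
  have hπ : Real.sqrt π ≠ 0 := by positivity
  field_simp

lemma fubini_step {σ V Δt : ℝ} (hσ : 0 < σ) (hΔt : 0 < Δt) :
    (∫ x in Ioi (0:ℝ), ∫ v in Iio (V - x / Δt),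
        (v - V) ^ 2 * Real.exp (-(2 * σ ^ 2)⁻¹ * v ^ 2))
      = ∫ v in Iio V, Δt * (V - v) * ((v - V) ^ 2 * Real.exp (-(2 * σ ^ 2)⁻¹ * v ^ 2)) := by
  set b : ℝ := (2 * σ ^ 2)⁻¹ with hb_def
  have hb : 0 < b := by rw [hb_def]; positivity
  set g : ℝ → ℝ := fun v => (v - V) ^ 2 * Real.exp (-b * v ^ 2) with hg_def
  have hg_cont : Continuous g := by rw [hg_def]; fun_prop
  have hg_nonneg : ∀ v, 0 ≤ g v := fun v => by
    simp only [hg_def]; positivity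
  set μ : Measure ℝ := volume.restrict (Ioi 0) with hμ_def
  set F : ℝ → ℝ → ℝ := fun x v => (Iio (Δt * (V - v))).indicator (fun _ => g v) x
    with hF_def
  have hiff : ∀ x v : ℝ, (v < V - x / Δt) ↔ (x < Δt * (V - v)) := by
    intro x v
    constructor <;> intro h
    · have h2 := (div_lt_iff₀ hΔt).1 (by linarith : x / Δt < V - v)
      nlinarith
    · have h2 : x / Δt < V - v := (div_lt_iff₀ hΔt).2 (by nlinarith)
      linarith
  have key1 : ∀ x : ℝ, (∫ v in Iio (V - x / Δt), g v) = ∫ v, F x v := by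
    intro x
    rw [← integral_indicator measurableSet_Iio]
    congr 1
    funext v
    simp only [hF_def, indicator_apply, mem_Iio]
    rw [if_congr (hiff x v).symm rfl rfl]
  have hset : MeasurableSet {p : ℝ × ℝ | p.1 < Δt * (V - p.2)} :=
    measurableSet_lt measurable_fst (by fun_prop)
  have hFeq : Function.uncurry F
      = Set.indicator {p : ℝ × ℝ | p.1 < Δt * (V - p.2)} (fun p => g p.2) := by
    funext p
    simp only [Function.uncurry, hF_def, indicator_apply, mem_Iio, mem_setOf_eq]
  have hmeas : AEStronglyMeasurable (Function.uncurry F) (μ.prod volume) := by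
    rw [hFeq]
    exact ((hg_cont.measurable.comp measurable_snd).indicator hset).aestronglyMeasurable
  have hinter : ∀ v : ℝ, Iio (Δt * (V - v)) ∩ Ioi 0 = Ioo 0 (Δt * (V - v)) := by
    intro v; ext y; simp [mem_Ioo, and_comm]
  have hsec : ∀ v : ℝ, Integrable (fun x => F x v) μ := by
    intro v
    simp only [hF_def]
    rw [integrable_indicator_iff measurableSet_Iio]
    refine integrableOn_const (LT.lt.ne ?_)
    rw [hμ_def, Measure.restrict_apply measurableSet_Iio, hinter v]
    exact measure_Ioo_lt_top
  have hval : ∀ v : ℝ, (∫ x, F x v ∂μ) = g v * max (Δt * (V - v)) 0 := by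
    intro v
    simp only [hF_def]
    rw [integral_indicator measurableSet_Iio, setIntegral_const, hμ_def, measureReal_def,
      Measure.restrict_apply measurableSet_Iio, hinter v, Real.volume_Ioo, smul_eq_mul,
      sub_zero, ENNReal.toReal_ofReal']
    ring
  have hnormval : ∀ v : ℝ, (∫ x, ‖F x v‖ ∂μ) = g v * max (Δt * (V - v)) 0 := by
    intro v
    have hnn : (fun x => ‖F x v‖) = fun x => F x v := by
      funext x
      simp only [hF_def]
      rw [norm_indicator_eq_indicator_norm]
      congr 1
      funext y
      rw [Real.norm_eq_abs, abs_of_nonneg (hg_nonneg v)]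
    rw [hnn]
    exact hval v
  have habs2 : ∀ v : ℝ, (v - V) ^ 2 ≤ (|v| + |V|) ^ 2 := by
    intro v
    nlinarith [abs_nonneg v, abs_nonneg V, le_abs_self v, neg_abs_le v,
      le_abs_self V, neg_abs_le V]
  have hmax : ∀ v : ℝ, max (Δt * (V - v)) 0 ≤ Δt * (|v| + |V|) := by
    intro v
    refine max_le ?_ (by positivity)
    have : V - v ≤ |v| + |V| := by
      have := le_abs_self V; have := neg_abs_le v; linarith
    nlinarith
  have hD : Integrable (fun v : ℝ => Δt * ((|v| + |V|) ^ 3 * Real.exp (-b * v ^ 2))) := by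
    have h3 := integrable_abs_pow_gauss hb 3
    have h2 := (integrable_abs_pow_gauss hb 2).const_mul (3 * |V|)
    have h1 := (integrable_abs_pow_gauss hb 1).const_mul (3 * |V| ^ 2)
    have h0 := (integrable_abs_pow_gauss hb 0).const_mul (|V| ^ 3)
    have hs := (((h3.add h2).add h1).add h0).const_mul Δt
    refine hs.congr (Eventually.of_forall fun v => ?_)
    simp only [Pi.add_apply]
    ring
  have hDint : Integrable (fun v => g v * max (Δt * (V - v)) 0) := by
    refine hD.mono' ?_ ?_
    · exact (hg_cont.mul (((continuous_const.mul
        (continuous_const.sub continuous_id)).max continuous_const))).aestronglyMeasurable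
    · filter_upwards with v
      have hnn : 0 ≤ g v * max (Δt * (V - v)) 0 :=
        mul_nonneg (hg_nonneg v) (le_max_right _ _)
      rw [Real.norm_eq_abs, abs_of_nonneg hnn]
      have h6 : g v ≤ (|v| + |V|) ^ 2 * Real.exp (-b * v ^ 2) := by
        simp only [hg_def]
        exact mul_le_mul_of_nonneg_right (habs2 v) (Real.exp_pos _).le
      have h7 : g v * max (Δt * (V - v)) 0
          ≤ ((|v| + |V|) ^ 2 * Real.exp (-b * v ^ 2)) * (Δt * (|v| + |V|)) :=
        mul_le_mul h6 (hmax v) (le_max_right _ _) (by positivity)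
      calc g v * max (Δt * (V - v)) 0
          ≤ ((|v| + |V|) ^ 2 * Real.exp (-b * v ^ 2)) * (Δt * (|v| + |V|)) := h7
        _ = Δt * ((|v| + |V|) ^ 3 * Real.exp (-b * v ^ 2)) := by ring
  have hF_int : Integrable (Function.uncurry F) (μ.prod volume) := by
    refine (integrable_prod_iff' hmeas).2 ⟨Eventually.of_forall hsec, ?_⟩
    exact hDint.congr (Eventually.of_forall fun v => (hnormval v).symm)
  have hswap := integral_integral_swap hF_int
  simp only [key1]
  rw [hswap]
  simp only [hval]
  have hind : (fun v => g v * max (Δt * (V - v)) 0)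
      = Set.indicator (Iio V) (fun v => Δt * (V - v) * g v) := by
    funext v
    by_cases h : v < V
    · rw [Set.indicator_of_mem (mem_Iio.2 h), max_eq_left (by nlinarith)]
      ring
    · push_neg at h
      rw [Set.indicator_of_notMem (by simpa using h),
        max_eq_right (by nlinarith : Δt * (V - v) ≤ 0), mul_zero]
  rw [hind, integral_indicator measurableSet_Iio]

theorem stmt_8 (σ V Δt : ℝ) (hσ : 0 < σ) (hΔt : 0 < Δt) :
    (∫ x in Set.Ioi (0 : ℝ), ∫ v in Set.Iio (V - x / Δt),
        (v - V) ^ 2 * Real.exp (-v ^ 2 / (2 * σ ^ 2))) / (Δt * σ * Real.sqrt (2 * Real.pi)) =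
      (1 / 2) * (V * (3 * σ ^ 2 + V ^ 2) * erfc (-V / (σ * Real.sqrt 2)) +
        (2 * σ ^ 2 + V ^ 2) * σ * Real.sqrt (2 / Real.pi) * Real.exp (-V ^ 2 / (2 * σ ^ 2))) := by
  have hexp : ∀ v : ℝ, Real.exp (-v ^ 2 / (2 * σ ^ 2))
      = Real.exp (-(2 * σ ^ 2)⁻¹ * v ^ 2) := by
    intro v; congr 1; ring
  simp only [hexp]
  rw [fubini_step hσ hΔt]
  have hcube : (∫ v in Iio V, Δt * (V - v) * ((v - V) ^ 2 * Real.exp (-(2 * σ ^ 2)⁻¹ * v ^ 2)))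
      = Δt * ∫ v in Iio V, (V - v) ^ 3 * Real.exp (-(2 * σ ^ 2)⁻¹ * v ^ 2) := by
    rw [← integral_const_mul]
    refine setIntegral_congr_fun measurableSet_Iio fun v _ => ?_
    ring
  rw [hcube, gauss_cube_integral hσ V, iic_gauss hσ V]
  have h2π : Real.sqrt (2 * π) = Real.sqrt 2 * Real.sqrt π :=
    Real.sqrt_mul (by norm_num) π
  have h2dπ : Real.sqrt (2 / π) = Real.sqrt 2 / Real.sqrt π :=
    Real.sqrt_div (by norm_num) π
  rw [h2π, h2dπ]
  have hs2 : Real.sqrt 2 ^ 2 = 2 := Real.sq_sqrt (by norm_num)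
  have hπ : Real.sqrt π > 0 := Real.sqrt_pos.2 Real.pi_pos
  have h2 : Real.sqrt 2 > 0 := by positivity
  field_simp
  ring_nf
  simp only [hs2]
  ring
end

section
/- Let γ > 0, D > 0 and define α(V) = −(λ_μ/(μ+1))·[(σ_μ² + V²)·erfc(−V/(σ_μ√2)) + V·σ_μ·√(2/π)·exp(−V²/(2σ_μ²))] with λ_μ = (1/4)√(π(μ+1)γ/(2D)) and σ_μ = √((μ+1)Dγ). Then as μ → ∞, α(V) − α(−V) → −γV uniformly for V in compact sets. -/
open MeasureTheory Real Filter

/-- The drift coefficient `α(V)` from collisions on one side in the 1D MD model [A],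
with `λ_μ = (1/4)√(π(μ+1)γ/(2D))` and `σ_μ = √((μ+1)Dγ)`. -/
noncomputable def alpha (γ D μ V : ℝ) : ℝ :=
  -(((1 / 4) * Real.sqrt (Real.pi * (μ + 1) * γ / (2 * D))) / (μ + 1)) *
    ((Real.sqrt ((μ + 1) * D * γ) ^ 2 + V ^ 2) *
        erfc (-V / (Real.sqrt ((μ + 1) * D * γ) * Real.sqrt 2)) +
      V * Real.sqrt ((μ + 1) * D * γ) * Real.sqrt (2 / Real.pi) *
        Real.exp (-V ^ 2 / (2 * Real.sqrt ((μ + 1) * D * γ) ^ 2)))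

lemma aux_cont : Continuous fun s : ℝ => Real.exp (-s ^ 2) :=
  Real.continuous_exp.comp (continuous_pow 2).neg

lemma aux_int : Integrable (fun s : ℝ => Real.exp (-s ^ 2)) := by
  simpa using integrable_exp_neg_mul_sq (b := (1:ℝ)) one_pos

lemma erfc_diff (x : ℝ) : erfc (-x) - erfc x =
    (4 / Real.sqrt Real.pi) * ∫ s in (0:ℝ)..x, Real.exp (-s ^ 2) := by
  have hIoi : ∀ a : ℝ, (∫ s in Set.Ioi a, Real.exp (-s ^ 2))
      = (∫ s : ℝ, Real.exp (-s ^ 2)) - ∫ s in Set.Iic a, Real.exp (-s ^ 2) := by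
    intro a
    have h := intervalIntegral.integral_Iic_add_Ioi (b := a)
      aux_int.integrableOn aux_int.integrableOn
    linarith
  have hsub : (∫ s in Set.Iic x, Real.exp (-s ^ 2))
      - (∫ s in Set.Iic (-x), Real.exp (-s ^ 2))
      = ∫ s in (-x)..x, Real.exp (-s ^ 2) :=
    intervalIntegral.integral_Iic_sub_Iic aux_int.integrableOn aux_int.integrableOn
  have h1 : (∫ s in (-x)..(0:ℝ), Real.exp (-s ^ 2)) = ∫ s in (0:ℝ)..x, Real.exp (-s ^ 2) := by
    have h := intervalIntegral.integral_comp_neg (a := (0:ℝ)) (b := x)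
      (f := fun s => Real.exp (-s ^ 2))
    simp only [neg_zero, neg_sq] at h
    exact h.symm
  have h2 := intervalIntegral.integral_add_adjacent_intervals (μ := volume)
    (a := -x) (b := (0:ℝ)) (c := x)
    (aux_cont.intervalIntegrable _ _) (aux_cont.intervalIntegrable _ _)
  have hsplit : (∫ s in (-x)..x, Real.exp (-s ^ 2)) = 2 * ∫ s in (0:ℝ)..x, Real.exp (-s ^ 2) := by
    rw [← h2, h1]; ring
  rw [hsplit] at hsub
  unfold erfc
  rw [hIoi (-x), hIoi x]
  linear_combination (2 / Real.sqrt Real.pi) * hsub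

lemma one_sub_exp (y : ℝ) (hy : 0 ≤ y) : |1 - Real.exp (-y)| ≤ y := by
  have h1 := Real.add_one_le_exp (-y)
  have h2 : Real.exp (-y) ≤ 1 := by
    calc Real.exp (-y) ≤ Real.exp 0 := Real.exp_le_exp.2 (by linarith)
    _ = 1 := Real.exp_zero
  rw [abs_le]; constructor <;> linarith

lemma gauss_near (t : ℝ) : |(∫ s in (0:ℝ)..t, Real.exp (-s ^ 2)) - t| ≤ t ^ 2 * |t| := by
  have hi1 : IntervalIntegrable (fun s : ℝ => Real.exp (-s ^ 2)) volume 0 t :=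
    aux_cont.intervalIntegrable _ _
  have heq : (∫ s in (0:ℝ)..t, Real.exp (-s ^ 2)) - t
      = ∫ s in (0:ℝ)..t, (Real.exp (-s ^ 2) - 1) := by
    rw [intervalIntegral.integral_sub hi1 intervalIntegrable_const]
    simp
  rw [heq]
  have := intervalIntegral.norm_integral_le_of_norm_le_const
    (a := (0:ℝ)) (b := t) (C := t ^ 2) (f := fun s => Real.exp (-s ^ 2) - 1) ?_
  · simpa [Real.norm_eq_abs] using this
  · intro s hs
    have hb : |Real.exp (-s ^ 2) - 1| ≤ s ^ 2 := by
      rw [abs_sub_comm]; exact one_sub_exp (s ^ 2) (sq_nonneg s)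
    have hs2 : s ^ 2 ≤ t ^ 2 := by
      rcases le_total 0 t with h | h
      · rw [Set.uIoc_of_le h] at hs
        nlinarith [hs.1, hs.2]
      · rw [Set.uIoc_comm, Set.uIoc_of_le h] at hs
        nlinarith [hs.1, hs.2]
    calc ‖Real.exp (-s ^ 2) - 1‖ = |Real.exp (-s ^ 2) - 1| := rfl
    _ ≤ s ^ 2 := hb
    _ ≤ t ^ 2 := hs2

lemma algebra_bound (γ M t : ℝ) (ht : t ≠ 0) :
    γ / t * (t ^ 2 / 2 + M ^ 2) * ((M / t) ^ 2 * (M / t)) + γ / t ^ 2 * M ^ 3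
      + γ / 2 * M * (M / t) ^ 2
    = γ * M ^ 3 * (2 * (t ^ 2)⁻¹ + M ^ 2 * ((t ^ 2)⁻¹) ^ 2) := by
  field_simp
  ring


/-- As `μ → ∞`, the total drift `α(V) - α(-V)` converges to `-γV`
uniformly for `V` in compact sets. -/
theorem stmt_9 (γ D : ℝ) (hγ : 0 < γ) (hD : 0 < D) (K : Set ℝ) (hK : IsCompact K) :
    TendstoUniformlyOn (fun (μ : ℝ) (V : ℝ) => alpha γ D μ V - alpha γ D μ (-V))
      (fun V => -γ * V) atTop K := by
  rw [Metric.tendstoUniformlyOn_iff]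
  intro ε hε
  obtain ⟨r, hr⟩ := hK.isBounded.subset_closedBall 0
  set M : ℝ := max r 1 with hMdef
  have hM1 : (0:ℝ) < M := lt_of_lt_of_le one_pos (le_max_right r 1)
  have hVMall : ∀ V ∈ K, |V| ≤ M := by
    intro V hV
    have h := hr hV
    rw [Metric.mem_closedBall, Real.dist_eq, sub_zero] at h
    exact h.trans (le_max_left r 1)
  have hu : Tendsto (fun μ : ℝ => 2 * ((μ + 1) * D * γ)) atTop atTop := by
    have h1 : Tendsto (fun μ : ℝ => μ + 1) atTop atTop :=
      tendsto_atTop_add_const_right _ 1 tendsto_id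
    have h2 : Tendsto (fun μ : ℝ => (μ + 1) * (D * γ * 2)) atTop atTop :=
      h1.atTop_mul_const (by positivity)
    exact h2.congr (fun μ => by ring)
  have hinv : Tendsto (fun μ : ℝ => (2 * ((μ + 1) * D * γ))⁻¹) atTop (nhds 0) :=
    hu.inv_tendsto_atTop
  have hB0 : Tendsto (fun μ : ℝ => γ * M ^ 3 *
      (2 * (2 * ((μ + 1) * D * γ))⁻¹ + M ^ 2 * ((2 * ((μ + 1) * D * γ))⁻¹) ^ 2))
      atTop (nhds 0) := by
    have h := ((hinv.const_mul (2:ℝ)).add ((hinv.pow 2).const_mul (M ^ 2))).const_mul (γ * M ^ 3)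
    simpa using h
  filter_upwards [hB0.eventually_lt_const hε, eventually_ge_atTop (0:ℝ)] with μ hBμ hμ0
  intro V hV
  have hVM : |V| ≤ M := hVMall V hV
  have hμ1 : (0:ℝ) < μ + 1 := by linarith
  have hpos : (0:ℝ) < (μ + 1) * D * γ := by positivity
  set T : ℝ := Real.sqrt ((μ + 1) * D * γ) * Real.sqrt 2 with hTdef
  have h20 : (0:ℝ) < Real.sqrt 2 := by positivity
  have hπ0 : (0:ℝ) < Real.sqrt Real.pi := Real.sqrt_pos.2 Real.pi_pos
  have hT0 : 0 < T := by rw [hTdef]; positivity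
  have hT2 : T ^ 2 = 2 * ((μ + 1) * D * γ) := by
    rw [hTdef, mul_pow, Real.sq_sqrt hpos.le, Real.sq_sqrt (by norm_num : (0:ℝ) ≤ 2)]; ring
  have hS : Real.sqrt (Real.pi * (μ + 1) * γ / (2 * D)) = (μ + 1) * γ * Real.sqrt Real.pi / T := by
    rw [eq_div_iff hT0.ne', hTdef, ← mul_assoc,
      ← Real.sqrt_mul (by positivity : (0:ℝ) ≤ Real.pi * (μ + 1) * γ / (2 * D)),
      ← Real.sqrt_mul (by positivity)]
    have harg : Real.pi * (μ + 1) * γ / (2 * D) * ((μ + 1) * D * γ) * 2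
        = Real.pi * ((μ + 1) * γ) ^ 2 := by field_simp
    rw [harg, Real.sqrt_mul Real.pi_pos.le, Real.sqrt_sq (by positivity : (0:ℝ) ≤ (μ + 1) * γ)]
    ring
  have hσ' : Real.sqrt ((μ + 1) * D * γ) = T / Real.sqrt 2 := by
    rw [hTdef, mul_div_assoc, div_self h20.ne', mul_one]
  have hQ2 : Real.sqrt (2 / Real.pi) = Real.sqrt 2 / Real.sqrt Real.pi :=
    Real.sqrt_div (by norm_num) _
  have key : alpha γ D μ V - alpha γ D μ (-V)
      = -(γ / T) * (T ^ 2 / 2 + V ^ 2) * (∫ s in (0:ℝ)..(V / T), Real.exp (-s ^ 2))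
        - γ * V * Real.exp (-(V / T) ^ 2) / 2 := by
    have h5 : (μ + 1) * D * γ = T ^ 2 / 2 := by rw [hT2]; ring
    have hexp : -(V ^ 2 / (2 * (T ^ 2 / 2))) = -(V / T) ^ 2 := by
      rw [div_pow]; field_simp
    simp only [alpha]
    rw [Real.sq_sqrt hpos.le, ← hTdef, hσ', h5]
    simp only [neg_neg, neg_sq, neg_div]
    rw [hexp]
    calc -(1 / 4 * Real.sqrt (Real.pi * (μ + 1) * γ / (2 * D)) / (μ + 1)) *
          ((T ^ 2 / 2 + V ^ 2) * erfc (-(V / T)) +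
            V * (T / Real.sqrt 2) * Real.sqrt (2 / Real.pi) * Real.exp (-(V / T) ^ 2)) -
        -(1 / 4 * Real.sqrt (Real.pi * (μ + 1) * γ / (2 * D)) / (μ + 1)) *
          ((T ^ 2 / 2 + V ^ 2) * erfc (V / T) +
            -V * (T / Real.sqrt 2) * Real.sqrt (2 / Real.pi) * Real.exp (-(V / T) ^ 2))
        = -(1 / 4 * Real.sqrt (Real.pi * (μ + 1) * γ / (2 * D)) / (μ + 1)) *
          ((T ^ 2 / 2 + V ^ 2) * (erfc (-(V / T)) - erfc (V / T)) +
            2 * V * (T / Real.sqrt 2) * Real.sqrt (2 / Real.pi) * Real.exp (-(V / T) ^ 2)) := by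
          ring
      _ = -(γ / T) * (T ^ 2 / 2 + V ^ 2) * (∫ s in (0:ℝ)..(V / T), Real.exp (-s ^ 2))
          - γ * V * Real.exp (-(V / T) ^ 2) / 2 := by
          rw [erfc_diff (V / T), hS, hQ2]
          field_simp
          ring
  rw [Real.dist_eq, abs_sub_comm]
  have hdist : alpha γ D μ V - alpha γ D μ (-V) - -γ * V
      = (-(γ / T) * (T ^ 2 / 2 + V ^ 2)) *
          ((∫ s in (0:ℝ)..(V / T), Real.exp (-s ^ 2)) - V / T)
        + (-(γ / T ^ 2)) * V ^ 3
        + (γ / 2) * V * (1 - Real.exp (-(V / T) ^ 2)) := by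
    rw [key]; field_simp; ring
  have hVTb : |V / T| ≤ M / T := by
    rw [abs_div, abs_of_pos hT0]
    gcongr
  have hV2 : V ^ 2 ≤ M ^ 2 := by nlinarith [sq_abs V, abs_nonneg V]
  have hGb : |(∫ s in (0:ℝ)..(V / T), Real.exp (-s ^ 2)) - V / T| ≤ (M / T) ^ 2 * (M / T) := by
    refine (gauss_near (V / T)).trans ?_
    calc (V / T) ^ 2 * |V / T| = |V / T| ^ 2 * |V / T| := by rw [sq_abs]
    _ = |V / T| ^ 3 := by ring
    _ ≤ (M / T) ^ 3 := pow_le_pow_left₀ (abs_nonneg _) hVTb 3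
    _ = (M / T) ^ 2 * (M / T) := by ring
  have hEb : |1 - Real.exp (-(V / T) ^ 2)| ≤ (M / T) ^ 2 := by
    refine (one_sub_exp _ (sq_nonneg _)).trans ?_
    calc (V / T) ^ 2 = |V / T| ^ 2 := (sq_abs _).symm
    _ ≤ (M / T) ^ 2 := pow_le_pow_left₀ (abs_nonneg _) hVTb 2
  have b1 : |(-(γ / T) * (T ^ 2 / 2 + V ^ 2)) *
        ((∫ s in (0:ℝ)..(V / T), Real.exp (-s ^ 2)) - V / T)|
      ≤ γ / T * (T ^ 2 / 2 + M ^ 2) * ((M / T) ^ 2 * (M / T)) := by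
    rw [abs_mul, abs_mul, abs_neg, abs_of_pos (div_pos hγ hT0),
      abs_of_nonneg (by positivity : (0:ℝ) ≤ T ^ 2 / 2 + V ^ 2)]
    gcongr
  have b2 : |(-(γ / T ^ 2)) * V ^ 3| ≤ γ / T ^ 2 * M ^ 3 := by
    rw [abs_mul, abs_neg, abs_of_pos (by positivity : (0:ℝ) < γ / T ^ 2), abs_pow]
    gcongr
  have b3 : |(γ / 2) * V * (1 - Real.exp (-(V / T) ^ 2))| ≤ γ / 2 * M * (M / T) ^ 2 := by
    rw [abs_mul, abs_mul, abs_of_pos (by positivity : (0:ℝ) < γ / 2)]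
    gcongr
  calc |alpha γ D μ V - alpha γ D μ (-V) - -γ * V|
      ≤ γ / T * (T ^ 2 / 2 + M ^ 2) * ((M / T) ^ 2 * (M / T)) + γ / T ^ 2 * M ^ 3
        + γ / 2 * M * (M / T) ^ 2 := by
        rw [hdist]
        refine ((abs_add_le _ _).trans (add_le_add (abs_add_le _ _) le_rfl)).trans ?_
        exact add_le_add (add_le_add b1 b2) b3
    _ = γ * M ^ 3 * (2 * (T ^ 2)⁻¹ + M ^ 2 * ((T ^ 2)⁻¹) ^ 2) := algebra_bound γ M T hT0.ne'
    _ = γ * M ^ 3 * (2 * (2 * ((μ + 1) * D * γ))⁻¹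
          + M ^ 2 * ((2 * ((μ + 1) * D * γ))⁻¹) ^ 2) := by rw [hT2]
    _ < ε := hBμ
end
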